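/- Let A and B be real symmetric n×n matrices all of whose eigenvalues are at least λ₀ > 0. Then for every t ≥ 0, ‖exp(-tA) - exp(-tB)‖ ≤ t·e^{-tλ₀}·‖A - B‖, and consequently sup_{t ≥ 0} ‖exp(-tA) - exp(-tB)‖ ≤ ‖A - B‖/(e·λ₀), where ‖·‖ denotes the operator norm with respect to the Euclidean norm on ℝⁿ. -/

import Mathlib

open Matrix

set_option maxHeartbeats 1000000
set_option synthInstance.maxHeartbeats 400000

/-- The Euclidean norm on `ℝⁿ`. -/
noncomputable def eNorm {n : ℕ} (v : Fin n → ℝ) : ℝ :=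
  Real.sqrt (∑ i, v i ^ 2)

/-- The operator norm of a matrix with respect to the Euclidean norm:
`sup {‖Mv‖₂ : ‖v‖₂ ≤ 1}`. -/
noncomputable def opNorm {n : ℕ} (M : Matrix (Fin n) (Fin n) ℝ) : ℝ :=
  sSup {c : ℝ | ∃ v : Fin n → ℝ, eNorm v ≤ 1 ∧ c = eNorm (M.mulVec v)}

namespace OpNormExpAux

open NormedSpace

lemma eNorm_eq {n : ℕ} (v : Fin n → ℝ) :
    eNorm v = ‖(WithLp.equiv 2 (Fin n → ℝ)).symm v‖ := by
  rw [eNorm, EuclideanSpace.norm_eq]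
  congr 1
  exact Finset.sum_congr rfl fun i _ => by simp [Real.norm_eq_abs, sq_abs]

lemma opNorm_eq {n : ℕ} (M : Matrix (Fin n) (Fin n) ℝ) :
    opNorm M = ‖toEuclideanCLM (𝕜 := ℝ) (n := Fin n) M‖ := by
  rw [← (toEuclideanCLM (𝕜 := ℝ) (n := Fin n) M).sSup_unitClosedBall_eq_norm, opNorm]
  congr 1
  ext c
  constructor
  · rintro ⟨v, hv, rfl⟩
    refine ⟨(WithLp.equiv 2 (Fin n → ℝ)).symm v, ?_, ?_⟩
    · rwa [Metric.mem_closedBall, dist_zero_right, ← eNorm_eq]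
    · show ‖toEuclideanCLM (𝕜 := ℝ) (n := Fin n) M ((WithLp.equiv 2 (Fin n → ℝ)).symm v)‖
        = eNorm (M.mulVec v)
      rw [eNorm_eq]; rfl
  · rintro ⟨x, hx, rfl⟩
    refine ⟨WithLp.equiv 2 (Fin n → ℝ) x, ?_, ?_⟩
    · rw [eNorm_eq, Equiv.symm_apply_apply]
      rwa [Metric.mem_closedBall, dist_zero_right] at hx
    · show ‖toEuclideanCLM (𝕜 := ℝ) (n := Fin n) M x‖
        = eNorm (M.mulVec (WithLp.equiv 2 (Fin n → ℝ) x))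
      rw [eNorm_eq]; rfl

lemma contPhi (n : ℕ) : Continuous (⇑(toEuclideanCLM (𝕜 := ℝ) (n := Fin n))) := by
  letI : SeminormedRing (Matrix (Fin n) (Fin n) ℝ) := Matrix.linftyOpSemiNormedRing
  letI : NormedRing (Matrix (Fin n) (Fin n) ℝ) := Matrix.linftyOpNormedRing
  letI : NormedAlgebra ℝ (Matrix (Fin n) (Fin n) ℝ) := Matrix.linftyOpNormedAlgebra
  let L : Matrix (Fin n) (Fin n) ℝ →ₗ[ℝ] (EuclideanSpace ℝ (Fin n) →L[ℝ] EuclideanSpace ℝ (Fin n)) :=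
    { toFun := ⇑(toEuclideanCLM (𝕜 := ℝ) (n := Fin n))
      map_add' := fun x y => map_add _ x y
      map_smul' := fun c x => map_smul _ c x }
  exact L.continuous_of_finiteDimensional

lemma phi_exp (n : ℕ) (M : Matrix (Fin n) (Fin n) ℝ) :
    toEuclideanCLM (𝕜 := ℝ) (n := Fin n) (exp M)
      = exp (toEuclideanCLM (𝕜 := ℝ) (n := Fin n) M) := by
  letI : SeminormedRing (Matrix (Fin n) (Fin n) ℝ) := Matrix.linftyOpSemiNormedRing
  letI : NormedRing (Matrix (Fin n) (Fin n) ℝ) := Matrix.linftyOpNormedRing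
  letI : NormedAlgebra ℝ (Matrix (Fin n) (Fin n) ℝ) := Matrix.linftyOpNormedAlgebra
  letI : NormedAlgebra ℚ (Matrix (Fin n) (Fin n) ℝ) := .restrictScalars ℚ ℝ _
  exact map_exp (toEuclideanCLM (𝕜 := ℝ) (n := Fin n)) (contPhi n) M

lemma norm_phi_diagonal_le (n : ℕ) (w : Fin n → ℝ) (c : ℝ) (hc : 0 ≤ c)
    (hw : ∀ i, |w i| ≤ c) :
    ‖toEuclideanCLM (𝕜 := ℝ) (n := Fin n) (diagonal w)‖ ≤ c := by
  refine ContinuousLinearMap.opNorm_le_bound _ hc fun x => ?_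
  rw [EuclideanSpace.norm_eq, EuclideanSpace.norm_eq]
  rw [← Real.sqrt_sq hc, ← Real.sqrt_mul (by positivity)]
  refine Real.sqrt_le_sqrt ?_
  rw [Finset.mul_sum]
  refine Finset.sum_le_sum fun i _ => ?_
  have h1 : (toEuclideanCLM (𝕜 := ℝ) (n := Fin n) (diagonal w) x) i
      = w i * (x i) := by
    have h0 : WithLp.equiv 2 (Fin n → ℝ) (toEuclideanCLM (𝕜 := ℝ) (n := Fin n) (diagonal w) x)
        = toLin' (diagonal w) (WithLp.equiv 2 (Fin n → ℝ) x) := rfl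
    calc (toEuclideanCLM (𝕜 := ℝ) (n := Fin n) (diagonal w) x) i
        = (WithLp.equiv 2 (Fin n → ℝ)
            (toEuclideanCLM (𝕜 := ℝ) (n := Fin n) (diagonal w) x)) i := rfl
      _ = (toLin' (diagonal w) (WithLp.equiv 2 (Fin n → ℝ) x)) i := by rw [h0]
      _ = w i * x i := by rw [toLin'_apply, mulVec_diagonal]; rfl
  rw [h1]
  have h2 := hw i
  simp only [Real.norm_eq_abs]
  rw [abs_mul]
  have h3 : |w i| ^ 2 ≤ c ^ 2 := by nlinarith [abs_nonneg (w i)]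
  nlinarith [abs_nonneg (x i), abs_nonneg (w i), sq_nonneg (x i)]

end OpNormExpAux

namespace OpNormExpAux
open NormedSpace
section
variable {𝔸 : Type*} [NormedRing 𝔸] [NormedAlgebra ℝ 𝔸] [CompleteSpace 𝔸]

lemma duhamel (T S : 𝔸) (lam0 : ℝ) (t : ℝ) (ht : 0 ≤ t)
    (hT : ∀ s : ℝ, 0 ≤ s → ‖exp ((-s) • T)‖ ≤ Real.exp (-s * lam0))
    (hS : ∀ s : ℝ, 0 ≤ s → ‖exp ((-s) • S)‖ ≤ Real.exp (-s * lam0)) :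
    ‖exp ((-t) • T) - exp ((-t) • S)‖ ≤ t * Real.exp (-t * lam0) * ‖T - S‖ := by
  set g : ℝ → 𝔸 := fun s => exp ((-s) • T) * exp ((s - t) • S) with hg
  set Dv : ℝ → 𝔸 := fun s => exp ((-s) • T) * (S - T) * exp ((s - t) • S) with hDv
  have hderiv : ∀ s : ℝ, HasDerivAt g (Dv s) s := by
    intro s
    have h1' := HasDerivAt.scomp (g₁ := fun u : ℝ => exp (u • T)) (h := fun u : ℝ => -u) s
      (hasDerivAt_exp_smul_const (𝕂 := ℝ) T (-s)) (hasDerivAt_neg s)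
    have h1 : HasDerivAt (fun u : ℝ => exp ((-u) • T))
        ((-1 : ℝ) • (exp ((-s) • T) * T)) s := h1'
    have h2' := HasDerivAt.scomp (g₁ := fun u : ℝ => exp (u • S)) (h := fun u : ℝ => u - t) s
      (hasDerivAt_exp_smul_const' (𝕂 := ℝ) S (s - t)) ((hasDerivAt_id s).sub_const t)
    have h2 : HasDerivAt (fun u : ℝ => exp ((u - t) • S))
        ((1 : ℝ) • (S * exp ((s - t) • S))) s := h2'
    have h3 := h1.mul h2
    have h4 : exp ((-s) • T) * (S - T) * exp ((s - t) • S) =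
        ((-1 : ℝ)) • (exp ((-s) • T) * T) * exp ((s - t) • S) +
          exp ((-s) • T) * ((1 : ℝ) • (S * exp ((s - t) • S))) := by
      simp only [neg_one_smul, one_smul]
      noncomm_ring
    have h5 : HasDerivAt g (exp ((-s) • T) * (S - T) * exp ((s - t) • S)) s := by
      rw [h4]; exact h3
    exact h5
  have hcont : Continuous Dv := by
    letI : NormedAlgebra ℚ 𝔸 := .restrictScalars ℚ ℝ _
    have c1 : Continuous fun s : ℝ => exp ((-s) • T) :=
      exp_continuous.comp ((continuous_neg).smul continuous_const)
    have c2 : Continuous fun s : ℝ => exp ((s - t) • S) :=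
      exp_continuous.comp (((continuous_id).sub continuous_const).smul continuous_const)
    exact (c1.mul continuous_const).mul c2
  have hftc : ∫ s in (0:ℝ)..t, Dv s = g t - g 0 :=
    intervalIntegral.integral_eq_sub_of_hasDerivAt (fun s _ => hderiv s)
      (hcont.intervalIntegrable 0 t)
  have hgt : g t = exp ((-t) • T) := by
    simp [hg, sub_self, zero_smul, exp_zero]
  have hg0 : g 0 = exp ((-t) • S) := by
    simp [hg, neg_zero, zero_smul, exp_zero, zero_sub, neg_smul]
  have hbound : ∀ s ∈ Set.uIoc (0:ℝ) t, ‖Dv s‖ ≤ Real.exp (-t * lam0) * ‖T - S‖ := by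
    intro s hs
    rw [Set.uIoc_of_le ht] at hs
    obtain ⟨hs0, hst⟩ := hs
    have e1 : ‖exp ((-s) • T)‖ ≤ Real.exp (-s * lam0) := hT s hs0.le
    have e2 : ‖exp ((s - t) • S)‖ ≤ Real.exp (-(t - s) * lam0) := by
      have h := hS (t - s) (by linarith)
      rw [show s - t = -(t - s) by ring]
      exact h
    have e3 : ‖S - T‖ = ‖T - S‖ := norm_sub_rev S T
    calc ‖Dv s‖ ≤ ‖exp ((-s) • T) * (S - T)‖ * ‖exp ((s - t) • S)‖ := norm_mul_le _ _
      _ ≤ (‖exp ((-s) • T)‖ * ‖S - T‖) * ‖exp ((s - t) • S)‖ :=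
          mul_le_mul_of_nonneg_right (norm_mul_le _ _) (norm_nonneg _)
      _ ≤ (Real.exp (-s * lam0) * ‖T - S‖) * Real.exp (-(t - s) * lam0) := by
          rw [e3]
          exact mul_le_mul (mul_le_mul_of_nonneg_right e1 (norm_nonneg _)) e2 (norm_nonneg _)
            (by positivity)
      _ = Real.exp (-t * lam0) * ‖T - S‖ := by
          have harg : -s * lam0 + -(t - s) * lam0 = -t * lam0 := by ring
          rw [mul_right_comm, ← Real.exp_add, harg]
  have := intervalIntegral.norm_integral_le_of_norm_le_const hbound
  rw [hftc, hgt, hg0] at this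
  calc ‖exp ((-t) • T) - exp ((-t) • S)‖
      ≤ Real.exp (-t * lam0) * ‖T - S‖ * |t - 0| := this
    _ = t * Real.exp (-t * lam0) * ‖T - S‖ := by
        rw [sub_zero, abs_of_nonneg ht]; ring

end

lemma norm_exp_le (n : ℕ) (M : Matrix (Fin n) (Fin n) ℝ) (hM : M.IsHermitian)
    (lam0 : ℝ) (hmin : ∀ i, lam0 ≤ hM.eigenvalues i) (s : ℝ) (hs : 0 ≤ s)
    :
    ‖exp ((-s) • toEuclideanCLM (𝕜 := ℝ) (n := Fin n) M)‖ ≤ Real.exp (-s * lam0) := by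
  set Φ := toEuclideanCLM (𝕜 := ℝ) (n := Fin n) with hΦ
  set U : Matrix (Fin n) (Fin n) ℝ := ↑(hM.eigenvectorUnitary) with hU
  have hU1 : star U * U = 1 := Unitary.coe_star_mul_self hM.eigenvectorUnitary
  have hU2 : U * star U = 1 := Unitary.coe_mul_star_self hM.eigenvectorUnitary
  have hu1 : star (Φ U) * Φ U = 1 := by
    rw [← map_star, ← _root_.map_mul, hU1, _root_.map_one]
  have hu2 : Φ U * star (Φ U) = 1 := by
    rw [← map_star, ← _root_.map_mul, hU2, _root_.map_one]
  let v : (EuclideanSpace ℝ (Fin n) →L[ℝ] EuclideanSpace ℝ (Fin n))ˣ :=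
    ⟨Φ U, star (Φ U), hu2, hu1⟩
  have hnormu : ‖Φ U‖ ≤ 1 := by
    have h1 : ‖star (Φ U) * Φ U‖ = ‖Φ U‖ * ‖Φ U‖ :=
      CStarRing.norm_star_mul_self (E := EuclideanSpace ℝ (Fin n) →L[ℝ] EuclideanSpace ℝ (Fin n))
        (x := Φ U)
    rw [hu1] at h1
    have h2 : ‖(1 : EuclideanSpace ℝ (Fin n) →L[ℝ] EuclideanSpace ℝ (Fin n))‖ ≤ 1 :=
      ContinuousLinearMap.norm_id_le
    nlinarith [norm_nonneg (Φ U)]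
  have hnormsu : ‖star (Φ U)‖ ≤ 1 := by
    have h1 : ‖star (star (Φ U)) * star (Φ U)‖ = ‖star (Φ U)‖ * ‖star (Φ U)‖ :=
      CStarRing.norm_star_mul_self (E := EuclideanSpace ℝ (Fin n) →L[ℝ] EuclideanSpace ℝ (Fin n))
        (x := star (Φ U))
    rw [star_star, hu2] at h1
    have h2 : ‖(1 : EuclideanSpace ℝ (Fin n) →L[ℝ] EuclideanSpace ℝ (Fin n))‖ ≤ 1 :=
      ContinuousLinearMap.norm_id_le
    nlinarith [norm_nonneg (star (Φ U))]
  have hspec : M = U * diagonal (RCLike.ofReal ∘ hM.eigenvalues) * star U := hM.spectral_theorem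
  set D : Matrix (Fin n) (Fin n) ℝ := diagonal (RCLike.ofReal ∘ hM.eigenvalues) with hD
  have hMs : (-s) • M = U * ((-s) • D) * star U := by
    rw [hspec]
    simp only [smul_mul_assoc, mul_smul_comm]
  have hMconj : (-s) • Φ M = ↑v * Φ ((-s) • D) * ↑v⁻¹ := by
    show (-s) • Φ M = Φ U * Φ ((-s) • D) * star (Φ U)
    rw [← map_star, ← _root_.map_mul, ← _root_.map_mul, ← _root_.map_smul, hMs]
  letI : NormedAlgebra ℚ (EuclideanSpace ℝ (Fin n) →L[ℝ] EuclideanSpace ℝ (Fin n)) :=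
    .restrictScalars ℚ ℝ _
  rw [hMconj, NormedSpace.exp_units_conj]
  have hdiag : exp (Φ ((-s) • D)) = Φ (diagonal (fun i => Real.exp (-s * hM.eigenvalues i))) := by
    rw [← OpNormExpAux.phi_exp _]   -- lemma
    congr 1
    have h3 : (-s) • D = diagonal (fun i => -s * hM.eigenvalues i) := by
      rw [hD, ← diagonal_smul]
      congr 1
    rw [h3, Matrix.exp_diagonal, Pi.exp_def]
    congr 1
    funext i
    rw [← Real.exp_eq_exp_ℝ]
  have hX : ‖exp (Φ ((-s) • D))‖ ≤ Real.exp (-s * lam0) := by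
    rw [hdiag]
    refine OpNormExpAux.norm_phi_diagonal_le _ _ _ (Real.exp_nonneg _) fun i => ?_
    rw [abs_of_pos (Real.exp_pos _)]
    exact Real.exp_le_exp.2 (by nlinarith [hmin i])
  have hv : (↑v : EuclideanSpace ℝ (Fin n) →L[ℝ] EuclideanSpace ℝ (Fin n)) = Φ U := rfl
  have hvi : (↑v⁻¹ : EuclideanSpace ℝ (Fin n) →L[ℝ] EuclideanSpace ℝ (Fin n)) = star (Φ U) := rfl
  calc ‖↑v * exp (Φ ((-s) • D)) * ↑v⁻¹‖
      ≤ ‖↑v * exp (Φ ((-s) • D))‖ *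
        ‖(↑v⁻¹ : EuclideanSpace ℝ (Fin n) →L[ℝ] EuclideanSpace ℝ (Fin n))‖ := norm_mul_le _ _
    _ ≤ (‖(↑v : EuclideanSpace ℝ (Fin n) →L[ℝ] EuclideanSpace ℝ (Fin n))‖ *
        ‖exp (Φ ((-s) • D))‖) *
        ‖(↑v⁻¹ : EuclideanSpace ℝ (Fin n) →L[ℝ] EuclideanSpace ℝ (Fin n))‖ :=
        mul_le_mul_of_nonneg_right (norm_mul_le _ _) (norm_nonneg _)
    _ ≤ (1 * Real.exp (-s * lam0)) * 1 := by
        rw [hv, hvi]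
        exact mul_le_mul (mul_le_mul hnormu hX (norm_nonneg _) zero_le_one) hnormsu
          (norm_nonneg _) (by positivity)
    _ = Real.exp (-s * lam0) := by ring

end OpNormExpAux


theorem opNorm_exp_sub_exp_le
    (n : ℕ) (A B : Matrix (Fin n) (Fin n) ℝ)
    (hA : A.IsHermitian) (hB : B.IsHermitian)
    (lam0 : ℝ) (hlam0 : 0 < lam0)
    (hminA : ∀ i, lam0 ≤ hA.eigenvalues i) (hminB : ∀ i, lam0 ≤ hB.eigenvalues i) :
    (∀ t : ℝ, 0 ≤ t →
      opNorm (NormedSpace.exp ((-t) • A) - NormedSpace.exp ((-t) • B))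
        ≤ t * Real.exp (-t * lam0) * opNorm (A - B)) ∧
    ∀ t : ℝ, 0 ≤ t →
      opNorm (NormedSpace.exp ((-t) • A) - NormedSpace.exp ((-t) • B))
        ≤ opNorm (A - B) / (Real.exp 1 * lam0) := by
  have key : ∀ t : ℝ, 0 ≤ t →
      opNorm (NormedSpace.exp ((-t) • A) - NormedSpace.exp ((-t) • B))
        ≤ t * Real.exp (-t * lam0) * opNorm (A - B) := by
    intro t ht
    rw [OpNormExpAux.opNorm_eq, OpNormExpAux.opNorm_eq]
    have hsplit : toEuclideanCLM (𝕜 := ℝ) (n := Fin n)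
          (NormedSpace.exp ((-t) • A) - NormedSpace.exp ((-t) • B))
        = NormedSpace.exp ((-t) • toEuclideanCLM (𝕜 := ℝ) (n := Fin n) A)
          - NormedSpace.exp ((-t) • toEuclideanCLM (𝕜 := ℝ) (n := Fin n) B) := by
      rw [map_sub, OpNormExpAux.phi_exp, OpNormExpAux.phi_exp, _root_.map_smul, _root_.map_smul]
    rw [hsplit, _root_.map_sub]
    exact OpNormExpAux.duhamel _ _ lam0 t ht
      (fun s hs => OpNormExpAux.norm_exp_le n A hA lam0 hminA s hs)
      (fun s hs => OpNormExpAux.norm_exp_le n B hB lam0 hminB s hs)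
  refine ⟨key, fun t ht => ?_⟩
  refine (key t ht).trans ?_
  have hC : 0 ≤ opNorm (A - B) := by
    rw [OpNormExpAux.opNorm_eq]; exact norm_nonneg _
  have hfac : t * Real.exp (-t * lam0) ≤ 1 / (Real.exp 1 * lam0) := by
    have hupos : (0 : ℝ) < Real.exp (t * lam0) := Real.exp_pos _
    have h2 : t * lam0 ≤ Real.exp (t * lam0 - 1) := by
      have := Real.add_one_le_exp (t * lam0 - 1)
      linarith
    have h2' : t * lam0 * Real.exp 1 ≤ Real.exp (t * lam0) := by
      have e1 : Real.exp (t * lam0 - 1) * Real.exp 1 = Real.exp (t * lam0) := by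
        rw [← Real.exp_add]; ring_nf
      nlinarith [Real.exp_pos 1]
    rw [neg_mul, Real.exp_neg, le_div_iff₀ (by positivity)]
    calc t * (Real.exp (t * lam0))⁻¹ * (Real.exp 1 * lam0)
        = (t * lam0 * Real.exp 1) * (Real.exp (t * lam0))⁻¹ := by ring
      _ ≤ Real.exp (t * lam0) * (Real.exp (t * lam0))⁻¹ :=
          mul_le_mul_of_nonneg_right h2' (inv_nonneg.2 hupos.le)
      _ = 1 := mul_inv_cancel₀ hupos.ne'
  calc t * Real.exp (-t * lam0) * opNorm (A - B)
      ≤ (1 / (Real.exp 1 * lam0)) * opNorm (A - B) :=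
        mul_le_mul_of_nonneg_right hfac hC
    _ = opNorm (A - B) / (Real.exp 1 * lam0) := by ring
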